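/- arXiv:1404.6956 — 4 statements merged into one kernel-verified Lean document; each statement's English description precedes it below -/
import Mathlib

section
/- Let H be a Hilbert space, (S_n) an increasing sequence of nonempty convex subsets of H with union S_∞, x ∈ H, and for each n let x_n ∈ S_n satisfy ‖x − x_n‖ < d(x, S_n) + 2^{−n}. If the sequence (d(x, S_n)) converges (to d(x, S_∞)), then (x_n) is a Cauchy sequence and hence converges to a limit x_∞ ∈ closure(S_∞) with ‖x − x_∞‖ = d(x, S_∞). -/
open Metric Filter

theorem stmt2 {H : Type*} [NormedAddCommGroup H] [InnerProductSpace ℝ H] [CompleteSpace H]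
    (S : ℕ → Set H) (hmono : Monotone S) (hconv : ∀ n, Convex ℝ (S n))
    (hne : ∀ n, (S n).Nonempty) (x : H) (xseq : ℕ → H)
    (hmem : ∀ n, xseq n ∈ S n)
    (hclose : ∀ n, ‖x - xseq n‖ < infDist x (S n) + 2 ^ (-(n : ℤ)))
    (hdist : Tendsto (fun n => infDist x (S n)) atTop
      (nhds (infDist x (⋃ n, S n)))) :
    CauchySeq xseq ∧
    ∃ xinf ∈ closure (⋃ n, S n), Tendsto xseq atTop (nhds xinf) ∧
      ‖x - xinf‖ = infDist x (⋃ n, S n) := by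
  set U := ⋃ n, S n with hU
  set d := infDist x U with hd
  have hsub : ∀ n, S n ⊆ U := fun n => Set.subset_iUnion S n
  have hdle : ∀ n, d ≤ infDist x (S n) := fun n =>
    infDist_le_infDist_of_subset (hsub n) (hne n)
  have hd0 : 0 ≤ d := infDist_nonneg
  have hfge : ∀ n, infDist x (S n) ≤ ‖x - xseq n‖ := fun n => by
    simpa [dist_eq_norm] using infDist_le_dist_of_mem (hmem n)
  -- f n = ‖x - xseq n‖ tends to d
  have hf_tendsto : Tendsto (fun n => ‖x - xseq n‖) atTop (nhds d) := by
    have h2 : Tendsto (fun n : ℕ => infDist x (S n) + 2 ^ (-(n : ℤ))) atTop (nhds (d + 0)) := by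
      refine hdist.add ?_
      exact_mod_cast tendsto_pow_atTop_nhds_zero_of_lt_one (by norm_num : (0:ℝ) ≤ 2⁻¹)
        (by norm_num : (2:ℝ)⁻¹ < 1) |>.comp tendsto_id |>.congr (fun n => by
          rw [zpow_neg, ← inv_zpow]; norm_num)
    rw [show d = d + 0 by ring] at hdist ⊢
    refine tendsto_of_tendsto_of_tendsto_of_le_of_le hdist h2 (fun n => hfge n)
      (fun n => le_of_lt (hclose n))
  -- g n := 2 * (‖x - xseq n‖^2 - d^2), nonneg and tends to 0
  set g : ℕ → ℝ := fun n => 2 * (‖x - xseq n‖ ^ 2 - d ^ 2) with hg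
  have hg0 : ∀ n, 0 ≤ g n := by
    intro n
    have : d ≤ ‖x - xseq n‖ := le_trans (hdle n) (hfge n)
    have := sq_le_sq' (by linarith [norm_nonneg (x - xseq n)]) this
    simp only [hg]; nlinarith
  have hg_tendsto : Tendsto g atTop (nhds 0) := by
    have h1 : Tendsto (fun n => ‖x - xseq n‖ ^ 2) atTop (nhds (d ^ 2)) := hf_tendsto.pow 2
    have h2 : Tendsto (fun n => ‖x - xseq n‖ ^ 2 - d ^ 2) atTop (nhds (d ^ 2 - d ^ 2)) :=
      h1.sub tendsto_const_nhds
    have h3 := h2.const_mul (2:ℝ)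
    simpa using h3
  -- key estimate
  have key : ∀ m n, m ≤ n → ‖xseq m - xseq n‖ ^ 2 ≤ g m + g n := by
    intro m n hmn
    set a := x - xseq m
    set b := x - xseq n
    have hmid : midpoint ℝ (xseq m) (xseq n) ∈ S n :=
      (hconv n).segment_subset (hmono hmn (hmem m)) (hmem n) (midpoint_mem_segment _ _)
    have hdn : infDist x (S n) ≤ ‖x - midpoint ℝ (xseq m) (xseq n)‖ := by
      simpa [dist_eq_norm] using infDist_le_dist_of_mem hmid
    have hab : a + b = (2:ℝ) • (x - midpoint ℝ (xseq m) (xseq n)) := by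
      simp only [a, b, midpoint_eq_smul_add, invOf_eq_inv]
      module
    have habn : ‖a + b‖ = 2 * ‖x - midpoint ℝ (xseq m) (xseq n)‖ := by
      rw [hab, norm_smul]; simp
    have hpar := parallelogram_law_with_norm ℝ a b
    have hamb : ‖a - b‖ = ‖xseq m - xseq n‖ := by
      have : a - b = xseq n - xseq m := by simp only [a, b]; abel
      rw [this, norm_sub_rev]
    have h1 : 2 * infDist x (S n) ≤ ‖a + b‖ := by rw [habn]; linarith
    have h1' : (2 * infDist x (S n)) ^ 2 ≤ ‖a + b‖ ^ 2 :=
      pow_le_pow_left₀ (by linarith [infDist_nonneg (s := S n) (x := x)]) h1 2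
    have hdm : d ≤ infDist x (S n) := hdle n
    have hid : infDist x (S n) ≥ 0 := infDist_nonneg
    have : ‖xseq m - xseq n‖ ^ 2 = 2 * ‖a‖ ^ 2 + 2 * ‖b‖ ^ 2 - ‖a + b‖ ^ 2 := by
      rw [← hamb]; simp only [sq]; linarith [hpar]
    rw [this]
    have hdd : 4 * d ^ 2 ≤ ‖a + b‖ ^ 2 := by nlinarith
    simp only [hg]; nlinarith
  have hkey : ∀ m n, ‖xseq m - xseq n‖ ^ 2 ≤ g m + g n := by
    intro m n
    rcases le_total m n with h | h
    · exact key m n h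
    · rw [norm_sub_rev]; linarith [key n m h]
  have hcauchy : CauchySeq xseq := by
    rw [Metric.cauchySeq_iff]
    intro ε hε
    have : ∀ᶠ n in atTop, g n < ε ^ 2 / 2 :=
      hg_tendsto.eventually (gt_mem_nhds (by positivity))
    obtain ⟨N, hN⟩ := this.exists_forall_of_atTop
    refine ⟨N, fun m hm n hn => ?_⟩
    have h1 := hN m hm
    have h2 := hN n hn
    have h3 := hkey m n
    have : dist (xseq m) (xseq n) ^ 2 < ε ^ 2 := by
      rw [dist_eq_norm]; linarith
    nlinarith [dist_nonneg (x := xseq m) (y := xseq n)]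
  obtain ⟨xinf, hxinf⟩ := cauchySeq_tendsto_of_complete hcauchy
  refine ⟨hcauchy, xinf, ?_, hxinf, ?_⟩
  · exact mem_closure_of_tendsto hxinf (Eventually.of_forall fun n => hsub n (hmem n))
  · have hcont : Tendsto (fun n => ‖x - xseq n‖) atTop (nhds ‖x - xinf‖) :=
      (tendsto_const_nhds.sub hxinf).norm
    exact tendsto_nhds_unique hcont hf_tendsto
end

section
/- Let 𝔄 be a linear subspace of the bounded operators on a Hilbert space H, let 𝔄_n denote {A ∈ 𝔄 : ‖A‖ ≤ n}, and let x, y ∈ H. Suppose for some positive integer N that d(y, 𝔄_N x) = d(y, 𝔄_{N+1} x), where 𝔄_N x = {Ax : A ∈ 𝔄_N}. If z is the closest point to y in the closure of 𝔄_N x, then y − z is orthogonal to Ax for every A ∈ 𝔄, and consequently d(y, 𝔄x) exists and equals d(y, 𝔄_N x). -/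
open Metric

theorem stmt4 {H : Type*} [NormedAddCommGroup H] [InnerProductSpace ℂ H] [CompleteSpace H]
    (𝔄 : Submodule ℂ (H →L[ℂ] H)) (x y : H) (N : ℕ) (hN : 0 < N)
    (hdist : infDist y ((fun A : H →L[ℂ] H => A x) '' {A | A ∈ 𝔄 ∧ ‖A‖ ≤ N}) =
             infDist y ((fun A : H →L[ℂ] H => A x) '' {A | A ∈ 𝔄 ∧ ‖A‖ ≤ N + 1}))
    (z : H)
    (hz : z ∈ closure ((fun A : H →L[ℂ] H => A x) '' {A | A ∈ 𝔄 ∧ ‖A‖ ≤ N}))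
    (hzmin : ‖y - z‖ = infDist y ((fun A : H →L[ℂ] H => A x) '' {A | A ∈ 𝔄 ∧ ‖A‖ ≤ N})) :
    (∀ A ∈ 𝔄, inner ℂ (y - z) (A x) = (0 : ℂ)) ∧
    infDist y ((fun A : H →L[ℂ] H => A x) '' (𝔄 : Set (H →L[ℂ] H))) =
      infDist y ((fun A : H →L[ℂ] H => A x) '' {A | A ∈ 𝔄 ∧ ‖A‖ ≤ N}) := by
  set f : (H →L[ℂ] H) → H := fun A => A x with hf
  set u : H := y - z with hu
  -- key variational inequality
  have hineq : ∀ (A : H →L[ℂ] H), A ∈ 𝔄 → ∀ t : ℂ, ‖t‖ * ‖A‖ ≤ 1 →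
      ‖u‖ ≤ ‖u - t • A x‖ := by
    intro A hA t ht
    have hmem : z + t • A x ∈ closure (f '' {A | A ∈ 𝔄 ∧ ‖A‖ ≤ (N : ℝ) + 1}) := by
      refine map_mem_closure (f := fun w => w + t • A x) (by continuity) hz ?_
      rintro _ ⟨B, ⟨hB, hBn⟩, rfl⟩
      refine ⟨B + t • A, ⟨𝔄.add_mem hB (𝔄.smul_mem t hA), ?_⟩, by simp [hf]⟩
      calc ‖B + t • A‖ ≤ ‖B‖ + ‖t • A‖ := norm_add_le _ _
        _ ≤ (N : ℝ) + 1 := by rw [norm_smul]; exact add_le_add hBn ht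
    calc ‖u‖ = infDist y (f '' {A | A ∈ 𝔄 ∧ ‖A‖ ≤ (N : ℝ) + 1}) := hzmin.trans hdist
      _ = infDist y (closure (f '' {A | A ∈ 𝔄 ∧ ‖A‖ ≤ (N : ℝ) + 1})) :=
          (infDist_closure).symm
      _ ≤ dist y (z + t • A x) := infDist_le_dist_of_mem hmem
      _ = ‖u - t • A x‖ := by rw [dist_eq_norm, hu]; congr 1; abel
  have key : ∀ A ∈ 𝔄, inner ℂ u (A x) = (0 : ℂ) := by
    intro A hA
    by_contra hc
    set v : H := A x with hv
    set c : ℂ := inner ℂ u v with hcdef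
    have hvne : v ≠ 0 := by
      intro h; exact hc (by rw [hcdef, h, inner_zero_right])
    have hcpos : (0 : ℝ) < ‖c‖ := norm_pos_iff.mpr hc
    have hvpos : (0 : ℝ) < ‖v‖ ^ 2 := pow_pos (norm_pos_iff.mpr hvne) 2
    set ε : ℝ := min (‖A‖ + 1)⁻¹ (‖c‖ / ‖v‖ ^ 2) with hε
    have hεpos : 0 < ε := lt_min (by positivity) (by positivity)
    set t : ℂ := (ε / ‖c‖ : ℝ) • (starRingEnd ℂ) c with htdef
    have hnt : ‖t‖ = ε := by
      rw [htdef, norm_smul, RCLike.norm_conj, Real.norm_eq_abs,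
        abs_of_pos (by positivity)]
      exact div_mul_cancel₀ _ hcpos.ne'
    have htA : ‖t‖ * ‖A‖ ≤ 1 := by
      rw [hnt]
      calc ε * ‖A‖ ≤ (‖A‖ + 1)⁻¹ * ‖A‖ :=
            mul_le_mul_of_nonneg_right (min_le_left _ _) (norm_nonneg _)
        _ ≤ (‖A‖ + 1)⁻¹ * (‖A‖ + 1) := by
            refine mul_le_mul_of_nonneg_left (by linarith) (by positivity)
        _ = 1 := inv_mul_cancel₀ (by positivity)
    have hle := hineq A hA t htA
    have hretc : Complex.re (t * c) = ε * ‖c‖ := by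
      rw [htdef]
      have : ((ε / ‖c‖ : ℝ) : ℂ) * (starRingEnd ℂ) c * c = ((ε / ‖c‖ * ‖c‖ ^ 2 : ℝ) : ℂ) := by
        rw [mul_assoc, Complex.conj_mul']
        push_cast
        ring
      rw [Complex.real_smul, this, Complex.ofReal_re, div_mul_eq_mul_div, pow_two,
        ← mul_assoc, mul_div_assoc, div_self hcpos.ne', mul_one]
    have hexp : ‖u - t • v‖ ^ 2 = ‖u‖ ^ 2 - 2 * (ε * ‖c‖) + ε ^ 2 * ‖v‖ ^ 2 := by
      rw [@norm_sub_sq ℂ, inner_smul_right]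
      rw [norm_smul, hnt]
      have : RCLike.re (t * c) = ε * ‖c‖ := hretc
      rw [← hcdef, this]
      ring
    have hsq : ‖u‖ ^ 2 ≤ ‖u - t • v‖ ^ 2 :=
      pow_le_pow_left₀ (norm_nonneg _) hle 2
    rw [hexp] at hsq
    have h2 : 2 * ‖c‖ ≤ ε * ‖v‖ ^ 2 := by nlinarith
    have h3 : ε * ‖v‖ ^ 2 ≤ ‖c‖ := by
      calc ε * ‖v‖ ^ 2 ≤ (‖c‖ / ‖v‖ ^ 2) * ‖v‖ ^ 2 :=
            mul_le_mul_of_nonneg_right (min_le_right _ _) (le_of_lt hvpos)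
        _ = ‖c‖ := div_mul_cancel₀ _ hvpos.ne'
    linarith
  refine ⟨key, ?_⟩
  -- z is orthogonal to y - z as well
  have hzorth : inner ℂ u z = (0 : ℂ) := by
    have hcl : IsClosed {w : H | inner ℂ u w = (0 : ℂ)} :=
      isClosed_eq (Continuous.inner continuous_const continuous_id) continuous_const
    have hsub : f '' {A | A ∈ 𝔄 ∧ ‖A‖ ≤ (N : ℝ)} ⊆ {w : H | inner ℂ u w = (0 : ℂ)} := by
      rintro _ ⟨B, ⟨hB, _⟩, rfl⟩
      exact key B hB
    exact (closure_minimal hsub hcl) hz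
  have hne : (f '' {A | A ∈ 𝔄 ∧ ‖A‖ ≤ (N : ℝ)}).Nonempty :=
    ⟨f 0, 0, ⟨𝔄.zero_mem, by simp⟩, rfl⟩
  refine le_antisymm ?_ ?_
  · exact infDist_le_infDist_of_subset
      (Set.image_mono (fun A hA => hA.1)) hne
  · rw [← hzmin]
    have hptwise : ∀ A ∈ 𝔄, ‖u‖ ≤ dist y (A x) := by
      intro A hA
      have horth : Complex.re (inner ℂ u (z - A x) : ℂ) = 0 := by
        rw [inner_sub_right, hzorth, key A hA, sub_zero, Complex.zero_re]
      have hexp : dist y (A x) ^ 2 = ‖u‖ ^ 2 + ‖z - A x‖ ^ 2 := by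
        have : y - A x = u + (z - A x) := by rw [hu]; abel
        rw [dist_eq_norm, this, @norm_add_sq ℂ]
        change _ + 2 * Complex.re _ + _ = _
        rw [horth]
        ring
      nlinarith [dist_nonneg (x := y) (y := A x), sq_nonneg ‖z - A x‖]
    refine le_of_not_gt fun hlt => ?_
    have hne' : (f '' (𝔄 : Set (H →L[ℂ] H))).Nonempty := ⟨f 0, 0, 𝔄.zero_mem, rfl⟩
    obtain ⟨w, ⟨B, hB, rfl⟩, hdw⟩ := (infDist_lt_iff hne').mp hlt
    exact absurd hdw (not_lt.mpr (hptwise B hB))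
end

section
/- Let 𝔄 be a linear subspace of B(H), x ∈ H, and suppose there exists r > 0 such that 𝔄x ∩ B(0, r) ⊆ 𝔄_1 x, where 𝔄_1 = {A ∈ 𝔄 : ‖A‖ ≤ 1}. Then for each y ∈ H and each positive integer N > 2‖y‖/r, the distance from y to 𝔄x equals the distance from y to 𝔄_N x, where 𝔄_N x = {N A x : A ∈ 𝔄_1}. -/
open Metric

theorem stmt6 {H : Type*} [NormedAddCommGroup H] [InnerProductSpace ℂ H] [CompleteSpace H]
    (𝔄 : Submodule ℂ (H →L[ℂ] H)) (x : H) (r : ℝ) (hr : 0 < r)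
    (hincl : ((fun A : H →L[ℂ] H => A x) '' (𝔄 : Set (H →L[ℂ] H))) ∩ ball 0 r ⊆
      (fun A : H →L[ℂ] H => A x) '' {A | A ∈ 𝔄 ∧ ‖A‖ ≤ 1}) :
    ∀ y : H, ∀ N : ℕ, (N : ℝ) > 2 * ‖y‖ / r →
      infDist y ((fun A : H →L[ℂ] H => A x) '' (𝔄 : Set (H →L[ℂ] H))) =
      infDist y ((fun A : H →L[ℂ] H => (N : ℂ) • A x) '' {A | A ∈ 𝔄 ∧ ‖A‖ ≤ 1}) := by
  intro y N hN
  set S : Set H := (fun A : H →L[ℂ] H => A x) '' (𝔄 : Set (H →L[ℂ] H)) with hS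
  set T : Set H := (fun A : H →L[ℂ] H => (N : ℂ) • A x) '' {A | A ∈ 𝔄 ∧ ‖A‖ ≤ 1} with hT
  have hN0 : (0 : ℝ) < N := lt_of_le_of_lt (div_nonneg (by positivity) hr.le) hN
  have hNC : ((N : ℂ)) ≠ 0 := by
    simp only [Ne, Nat.cast_eq_zero]; exact_mod_cast hN0.ne'
  have hNr : 2 * ‖y‖ < N * r := by
    have := (div_lt_iff₀ hr).mp hN
    linarith
  have hTne : T.Nonempty := ⟨(N : ℂ) • (0 : H →L[ℂ] H) x, ⟨0, ⟨𝔄.zero_mem, by simp⟩, rfl⟩⟩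
  have hSne : S.Nonempty := ⟨(0 : H →L[ℂ] H) x, ⟨0, 𝔄.zero_mem, rfl⟩⟩
  have hsub : T ⊆ S := by
    rintro _ ⟨A, ⟨hA, -⟩, rfl⟩
    exact ⟨(N : ℂ) • A, 𝔄.smul_mem _ hA, by simp⟩
  have h0S : (0 : H) ∈ S := ⟨0, 𝔄.zero_mem, by simp⟩
  have hle1 : infDist y S ≤ infDist y T := infDist_le_infDist_of_subset hsub hTne
  have hinf_y : infDist y S ≤ ‖y‖ := by
    simpa [dist_eq_norm] using infDist_le_dist_of_mem h0S
  refine le_antisymm hle1 ?_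
  refine le_of_forall_pos_le_add fun ε hε => ?_
  set δ : ℝ := min ε ((N * r - 2 * ‖y‖) / 2) with hδdef
  have hδ : 0 < δ := lt_min hε (by linarith)
  obtain ⟨z, hzS, hzd⟩ := (infDist_lt_iff hSne).mp
    (lt_add_of_pos_right (infDist y S) hδ)
  obtain ⟨A, hA, rfl⟩ := hzS
  have hnz : ‖A x‖ < N * r := by
    have h1 : ‖A x‖ ≤ dist y (A x) + ‖y‖ := by
      rw [dist_comm, dist_eq_norm]
      calc ‖A x‖ = ‖A x - y + y‖ := by rw [sub_add_cancel]
        _ ≤ ‖A x - y‖ + ‖y‖ := norm_add_le _ _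
    have h2 : δ ≤ (N * r - 2 * ‖y‖) / 2 := min_le_right _ _
    linarith
  have hw : ((N : ℂ)⁻¹ • A) x ∈ S ∩ ball 0 r := by
    constructor
    · exact ⟨(N : ℂ)⁻¹ • A, 𝔄.smul_mem _ hA, rfl⟩
    · rw [mem_ball_zero_iff]
      have : ‖((N : ℂ)⁻¹ • A) x‖ = ‖A x‖ / N := by
        simp [norm_smul, Complex.norm_natCast, div_eq_inv_mul]
      rw [this, div_lt_iff₀ hN0]
      linarith [hnz]
  obtain ⟨B, ⟨hB, hBn⟩, hBx⟩ := hincl hw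
  have hBx' : B x = ((N : ℂ)⁻¹ • A) x := hBx
  have hTz : A x ∈ T := by
    refine ⟨B, ⟨hB, hBn⟩, ?_⟩
    show (N : ℂ) • B x = A x
    rw [hBx']
    simp [smul_smul, mul_inv_cancel₀ hNC]
  calc infDist y T ≤ dist y (A x) := infDist_le_dist_of_mem hTz
    _ ≤ infDist y S + δ := hzd.le
    _ ≤ infDist y S + ε := by linarith [min_le_left ε ((N * r - 2 * ‖y‖) / 2)]
end

section
/- Open mapping theorem via superconvexity: Let X be a Banach space and C ⊆ X a bounded, balanced, superconvex subset such that X = ⋃_{n≥1} nC. Then there exists r > 0 such that the open ball B(0, r) is contained in C. -/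
open Metric Pointwise

theorem stmt12 {X : Type*} [NormedAddCommGroup X] [NormedSpace ℝ X] [CompleteSpace X]
    (C : Set X) (hbdd : Bornology.IsBounded C) (hbal : Balanced ℝ C)
    (hsuper : ∀ (x : ℕ → X), (∀ n, x n ∈ C) →
      ∀ (l : ℕ → ℝ), (∀ n, 0 ≤ l n) → HasSum l 1 →
      ∀ s : X, HasSum (fun n => l n • x n) s → s ∈ C)
    (hcover : ∀ x : X, ∃ n : ℕ, 0 < n ∧ x ∈ (fun c => (n : ℝ) • c) '' C) :
    ∃ r > (0 : ℝ), ball (0 : X) r ⊆ C := by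
  classical
  -- C is nonempty (from cover of 0)
  have hCne : C.Nonempty := by
    obtain ⟨n, hn, c, hc, -⟩ := hcover 0
    exact ⟨c, hc⟩
  -- Step A: C is convex
  have hconv : Convex ℝ C := by
    intro a ha b hb p q hp hq hpq
    set xs : ℕ → X := fun n => if n = 0 then a else b with hxs
    have hxsC : ∀ n, xs n ∈ C := by
      intro n; by_cases h : n = 0 <;> simp [hxs, h, ha, hb]
    set l : ℕ → ℝ := fun n => if n = 0 then p else if n = 1 then q else 0 with hl
    have hlnn : ∀ n, 0 ≤ l n := by
      intro n; rcases n with _ | _ | n <;> simp [hl, hp, hq]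
    have hlsum : HasSum l 1 := by
      have h1 : HasSum (fun n : ℕ => if n = 0 then p else 0) p := hasSum_ite_eq 0 p
      have h2 : HasSum (fun n : ℕ => if n = 1 then q else 0) q := hasSum_ite_eq 1 q
      have := h1.add h2
      rw [hpq] at this
      convert this using 1
      funext n; rcases n with _ | _ | n <;> simp [hl]
    have hssum : HasSum (fun n => l n • xs n) (p • a + q • b) := by
      have h1 : HasSum (fun n : ℕ => if n = 0 then p • a else 0) (p • a) :=
        hasSum_ite_eq 0 (p • a)
      have h2 : HasSum (fun n : ℕ => if n = 1 then q • b else 0) (q • b) :=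
        hasSum_ite_eq 1 (q • b)
      have := h1.add h2
      convert this using 1
      funext n; rcases n with _ | _ | n <;> simp [hl, hxs]
    exact hsuper xs hxsC l hlnn hlsum _ hssum
  -- Step B: Baire category
  have hUnion : (⋃ n : ℕ, closure ((((n : ℕ) : ℝ) + 1) • C)) = Set.univ := by
    ext x
    simp only [Set.mem_iUnion, Set.mem_univ, iff_true]
    obtain ⟨n, hn, hx⟩ := hcover x
    rw [Set.image_smul] at hx
    refine ⟨n - 1, subset_closure ?_⟩
    have h1 : ((n - 1 : ℕ) : ℝ) + 1 = (n : ℝ) := by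
      have := Nat.succ_pred_eq_of_pos hn
      exact_mod_cast congrArg (Nat.cast : ℕ → ℝ) this
    rwa [h1]
  obtain ⟨n, x1, hx1⟩ :=
    nonempty_interior_of_iUnion_of_closed (fun n : ℕ => isClosed_closure) hUnion
  have hm : (((n : ℕ) : ℝ) + 1) ≠ 0 := by positivity
  rw [closure_smul₀, interior_smul₀ hm] at hx1
  obtain ⟨y, hy, -⟩ := hx1
  -- ball y ε ⊆ closure C
  obtain ⟨ε, hε, hball⟩ := Metric.mem_nhds_iff.mp (mem_interior_iff_mem_nhds.mp hy)
  -- Step C: ball 0 ε ⊆ closure C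
  have hball0 : ball (0 : X) ε ⊆ closure C := by
    intro z hz
    rw [mem_ball_zero_iff] at hz
    have h1 : y + z ∈ closure C := hball (by simp [mem_ball_iff_norm, hz])
    have h2 : y - z ∈ closure C := hball (by simpa [mem_ball_iff_norm, norm_neg] using hz)
    have h3 : (-1 : ℝ) • (y - z) ∈ closure C :=
      hbal.closure.smul_mem (by norm_num) h2
    have h4 := hconv.closure h1 h3 (by norm_num : (0:ℝ) ≤ 1/2)
      (by norm_num : (0:ℝ) ≤ 1/2) (by norm_num)
    convert h4 using 1
    module
  -- pick function
  have pick : ∀ y : {y : X // ‖y‖ < ε}, ∃ c, c ∈ C ∧ ‖(y : X) - c‖ < ε / 2 := by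
    rintro ⟨v, hv⟩
    have hvC : v ∈ closure C := hball0 (mem_ball_zero_iff.mpr hv)
    obtain ⟨c, hcC, hc⟩ := Metric.mem_closure_iff.mp hvC (ε / 2) (by positivity)
    exact ⟨c, hcC, by rwa [← dist_eq_norm]⟩
  refine ⟨ε / 2, by positivity, ?_⟩
  intro x hx
  rw [mem_ball_zero_iff] at hx
  -- Step D: series construction
  set F : {y : X // ‖y‖ < ε} → {y : X // ‖y‖ < ε} := fun y =>
    ⟨(2 : ℝ) • ((y : X) - Classical.choose (pick y)), by
      have h := (Classical.choose_spec (pick y)).2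
      rw [norm_smul]
      simp only [Real.norm_ofNat]
      linarith⟩ with hF
  have hx2 : ‖(2 : ℝ) • x‖ < ε := by
    rw [norm_smul]; simp only [Real.norm_ofNat]; linarith
  set f : ℕ → {y : X // ‖y‖ < ε} := fun n => F^[n] ⟨(2 : ℝ) • x, hx2⟩ with hf
  set c : ℕ → X := fun n => Classical.choose (pick (f n)) with hc
  have hcC : ∀ n, c n ∈ C := fun n => (Classical.choose_spec (pick (f n))).1
  have hstep : ∀ n, (f (n + 1) : X) = (2 : ℝ) • ((f n : X) - c n) := by
    intro n
    simp only [hf, Function.iterate_succ_apply']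
    rfl
  -- invariant
  have hinv : ∀ n, x - ∑ k ∈ Finset.range n, ((1 / 2 : ℝ)) ^ (k + 1) • c k
      = ((1 / 2 : ℝ)) ^ (n + 1) • (f n : X) := by
    intro n
    induction n with
    | zero =>
      simp only [Finset.range_zero, Finset.sum_empty, sub_zero, zero_add, pow_one, hf,
        Function.iterate_zero, id_eq, smul_smul]
      norm_num
    | succ n ih =>
      rw [Finset.sum_range_succ, ← sub_sub, ih, hstep n, smul_smul,
        show ((1 / 2 : ℝ) ^ (n + 1 + 1) * 2) = (1 / 2 : ℝ) ^ (n + 1) from by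
          rw [pow_succ]; ring,
        smul_sub]
  -- partial sums tend to x
  have htend : Filter.Tendsto
      (fun n => ∑ k ∈ Finset.range n, ((1 / 2 : ℝ)) ^ (k + 1) • c k)
      Filter.atTop (nhds x) := by
    rw [← tendsto_sub_nhds_zero_iff]
    have hb : ∀ n, ‖(∑ k ∈ Finset.range n, ((1 / 2 : ℝ)) ^ (k + 1) • c k) - x‖
        ≤ ε * (1 / 2 : ℝ) ^ (n + 1) := by
      intro n
      rw [← norm_neg, neg_sub, hinv n, norm_smul]
      have h1 : ‖(f n : X)‖ ≤ ε := le_of_lt (f n).2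
      have h2 : ‖((1 / 2 : ℝ)) ^ (n + 1)‖ = (1 / 2 : ℝ) ^ (n + 1) := by
        rw [Real.norm_eq_abs, abs_pow]; norm_num
      rw [h2]
      calc (1 / 2 : ℝ) ^ (n + 1) * ‖(f n : X)‖ ≤ (1 / 2 : ℝ) ^ (n + 1) * ε := by
            apply mul_le_mul_of_nonneg_left h1 (by positivity)
        _ = ε * (1 / 2 : ℝ) ^ (n + 1) := by ring
    have hlim : Filter.Tendsto (fun n : ℕ => ε * (1 / 2 : ℝ) ^ (n + 1))
        Filter.atTop (nhds 0) := by
      have := (tendsto_pow_atTop_nhds_zero_of_lt_one (by norm_num : (0:ℝ) ≤ 1/2)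
        (by norm_num : (1/2 : ℝ) < 1)).comp (Filter.tendsto_add_atTop_nat 1)
      simpa using this.const_mul ε
    exact squeeze_zero_norm hb hlim
  -- summability
  obtain ⟨M, hM⟩ := hbdd.exists_norm_le
  have hsummable : Summable (fun n => ((1 / 2 : ℝ)) ^ (n + 1) • c n) := by
    apply Summable.of_norm_bounded (g := fun n => (max M 0) * (1 / 2 : ℝ) ^ (n + 1))
    · have : Summable (fun n : ℕ => (1 / 2 : ℝ) ^ (n + 1)) := by
        have := summable_geometric_of_lt_one (by norm_num : (0:ℝ) ≤ 1/2)
          (by norm_num : (1/2 : ℝ) < 1)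
        exact (summable_nat_add_iff 1).mpr this
      exact this.mul_left _
    · intro n
      rw [norm_smul, Real.norm_eq_abs, abs_pow]
      have h1 : ‖c n‖ ≤ max M 0 := le_trans (hM _ (hcC n)) (le_max_left _ _)
      have h2 : |(1/2 : ℝ)| ^ (n+1) = (1/2 : ℝ) ^ (n+1) := by norm_num
      rw [h2]
      calc (1 / 2 : ℝ) ^ (n + 1) * ‖c n‖ ≤ (1 / 2 : ℝ) ^ (n + 1) * max M 0 :=
            mul_le_mul_of_nonneg_left h1 (by positivity)
        _ = max M 0 * (1 / 2 : ℝ) ^ (n + 1) := by ring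
  have hsum_x : HasSum (fun n => ((1 / 2 : ℝ)) ^ (n + 1) • c n) x := by
    have h := hsummable.hasSum
    have h2 := h.tendsto_sum_nat
    rwa [tendsto_nhds_unique h2 htend] at h
  -- l sums to 1
  have hlsum : HasSum (fun n : ℕ => ((1 / 2 : ℝ)) ^ (n + 1)) 1 := by
    have := hasSum_geometric_two.mul_left (1 / 2 : ℝ)
    have he : (1 / 2 : ℝ) * 2 = 1 := by norm_num
    rw [he] at this
    convert this using 1
    · rfl
    funext n; rw [pow_succ]; ring
  exact hsuper c hcC _ (fun n => by positivity) hlsum x hsum_x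
end
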